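/- Let n ≥ 1, let X be an n×n complex matrix, and let i, j, i', j' ∈ {1,…,n}. Let E_{ab} denote the n×n matrix unit with 1 in position (a,b) and 0 elsewhere, and let R_0 be the standard R-matrix (R_0 ξ)_{ij} = sign(j−i)·ξ_{ij}. Then ½·Tr(R_0(E_{ji}·X)·(E_{j'i'}·X)) − ½·Tr(R_0(X·E_{ji})·(X·E_{j'i'})) = ½·(sign(i'−i) + sign(j'−j))·X_{ij'}·X_{i'j}. (This is the Sklyanin bracket of the coordinate functions x_{ij} and x_{i'j'} associated with R_0, evaluated at X.) -/

import Mathlib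

/-- The standard R-matrix `R₀` on `n × n` complex matrices:
`(R₀ ξ)_{ij} = sign(j - i) · ξ_{ij}`. -/
def R0 {n : ℕ} (ξ : Matrix (Fin n) (Fin n) ℂ) : Matrix (Fin n) (Fin n) ℂ :=
  Matrix.of fun i j => ((Int.sign ((j : ℤ) - (i : ℤ)) : ℤ) : ℂ) * ξ i j

/-- The matrix unit `E_{ab}` with a `1` in position `(a,b)` and `0` elsewhere. -/
def E {n : ℕ} (a b : Fin n) : Matrix (Fin n) (Fin n) ℂ :=
  Matrix.single a b 1

/-- The Sklyanin bracket associated with the standard R-matrix `R₀`, evaluated on the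
coordinate functions `x_{ij}`, `x_{i'j'}` at the matrix `X`:
`½ Tr(R₀(E_{ji}X)·(E_{j'i'}X)) − ½ Tr(R₀(X E_{ji})·(X E_{j'i'}))
  = ½ (sign(i'−i) + sign(j'−j)) X_{ij'} X_{i'j}`. -/
theorem sklyanin_R0_on_matrix_entries (n : ℕ) (hn : 1 ≤ n)
    (X : Matrix (Fin n) (Fin n) ℂ) (i j i' j' : Fin n) :
    (1 / 2 : ℂ) * Matrix.trace (R0 (E j i * X) * (E j' i' * X))
      - (1 / 2 : ℂ) * Matrix.trace (R0 (X * E j i) * (X * E j' i'))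
      = (1 / 2 : ℂ)
          * ((Int.sign ((i' : ℤ) - (i : ℤ)) + Int.sign ((j' : ℤ) - (j : ℤ)) : ℤ) : ℂ)
          * X i j' * X i' j := by
  simp only [Matrix.trace, Matrix.diag_apply, Matrix.mul_apply, R0, E,
    Matrix.single, Matrix.of_apply, ite_mul, mul_ite, one_mul, zero_mul,
    mul_zero, mul_one, ite_and]
  simp [Finset.mul_sum, Finset.sum_ite_eq, Finset.sum_ite_eq', apply_ite]
  have : ((((i':ℤ) - i).sign : ℂ)) = -(((i:ℤ) - i').sign : ℂ) := by
    have h : ((i':ℤ) - i) = -((i:ℤ) - i') := by ring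
    rw [h, Int.sign_neg]; push_cast; ring
  rw [this]; ring
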